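/- arXiv:1402.4206 — 4 statements merged into one kernel-verified Lean document; each statement's English description precedes it below -/
import Mathlib

section
/- Let m ≥ 1 and let G : ℝ^m → ℝ and Σ : ℝ^m → ℝ be C² functions. Then the inequality (Ξ + ∇G(τ)) · (τ + ∇Σ(Ξ)) ≥ 0 holds for all Ξ, τ ∈ ℝ^m if and only if the following three conditions hold: (i) for all Ξ, τ ∈ ℝ^m, Ξ + ∇G(τ) = 0 if and only if τ + ∇Σ(Ξ) = 0; (ii) G is convex; (iii) Σ is convex. -/
open scoped RealInnerProductSpace

section Aux

variable {E : Type*} [NormedAddCommGroup E] [InnerProductSpace ℝ E] [CompleteSpace E]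

/-- Derivative of a function along a line, expressed via the gradient. -/
lemma hasDerivAt_line (f : E → ℝ) (hf : Differentiable ℝ f) (x v : E) (t : ℝ) :
    HasDerivAt (fun s : ℝ => f (x + s • v)) ⟪gradient f (x + t • v), v⟫ t := by
  have hline : HasDerivAt (fun s : ℝ => x + s • v) v t := by
    simpa using ((hasDerivAt_id t).smul_const v).const_add x
  have hgrad : HasFDerivAt f (InnerProductSpace.toDual ℝ E (gradient f (x + t • v)))
      (x + t • v) :=
    hasGradientAt_iff_hasFDerivAt.1 (hf (x + t • v)).hasGradientAt
  simpa [InnerProductSpace.toDual_apply_apply, Function.comp_def] using hgrad.comp_hasDerivAt t hline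

/-- If the gradient of a differentiable function is monotone, the function is convex. -/
lemma convexOn_of_inner_mono (f : E → ℝ) (hf : Differentiable ℝ f)
    (h : ∀ x y : E, 0 ≤ ⟪gradient f y - gradient f x, y - x⟫) :
    ConvexOn ℝ Set.univ f := by
  refine ⟨convex_univ, fun x _ y _ a b ha hb hab => ?_⟩
  set v := y - x with hv
  set φ : ℝ → ℝ := fun s => f (x + s • v) with hφ
  have hφd : ∀ t : ℝ, HasDerivAt φ ⟪gradient f (x + t • v), v⟫ t :=
    fun t => hasDerivAt_line f hf x v t
  have hmono : Monotone (deriv φ) := by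
    intro s t hst
    rw [(hφd s).deriv, (hφd t).deriv]
    rcases eq_or_lt_of_le hst with rfl | hst'
    · exact le_rfl
    · have key := h (x + s • v) (x + t • v)
      have hdiff : (x + t • v) - (x + s • v) = (t - s) • v := by
        rw [sub_smul]; abel
      rw [hdiff, real_inner_smul_right, inner_sub_left] at key
      nlinarith [key, sub_pos.2 hst']
  have hconv : ConvexOn ℝ Set.univ φ :=
    Monotone.convexOn_univ_of_deriv (fun t => (hφd t).differentiableAt) hmono
  have h01 := hconv.2 (Set.mem_univ (0 : ℝ)) (Set.mem_univ (1 : ℝ)) ha hb hab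
  have hpt : x + (a • (0:ℝ) + b • 1) • v = a • x + b • y := by
    have hb' : a = 1 - b := by linarith
    subst hb'
    simp [hv]
    module
  have hφ0 : φ (a • (0:ℝ) + b • 1) = f (a • x + b • y) := congrArg f hpt
  have hφx : φ 0 = f x := by simp [hφ]
  have hφy : φ 1 = f y := by simp [hφ, hv]
  rw [hφ0, hφx, hφy] at h01
  simpa using h01

/-- Convexity of a differentiable function implies monotonicity of the gradient. -/
lemma inner_mono_of_convexOn (f : E → ℝ) (hf : Differentiable ℝ f)
    (hc : ConvexOn ℝ Set.univ f) (x y : E) :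
    0 ≤ ⟪gradient f y - gradient f x, y - x⟫ := by
  set v := y - x with hv
  set φ : ℝ → ℝ := fun s => f (x + s • v) with hφ
  have hφd : ∀ t : ℝ, HasDerivAt φ ⟪gradient f (x + t • v), v⟫ t :=
    fun t => hasDerivAt_line f hf x v t
  have hφc : ConvexOn ℝ Set.univ φ := by
    have := hc.comp_affineMap (AffineMap.lineMap x y)
    have heq : (f ∘ (AffineMap.lineMap x y : ℝ →ᵃ[ℝ] E)) = φ := by
      funext t
      simp [hφ, AffineMap.lineMap_apply, hv]
      rw [add_comm]
    rw [heq] at this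
    simpa using this
  have hmono : MonotoneOn (deriv φ) (interior (Set.univ : Set ℝ)) :=
    ConvexOn.monotoneOn_deriv hφc (fun t _ => (hφd t).differentiableAt)
      |>.mono (by rw [interior_univ])
  have h01 : deriv φ 0 ≤ deriv φ 1 := by
    rw [interior_univ] at hmono
    exact hmono (Set.mem_univ _) (Set.mem_univ _) zero_le_one
  rw [(hφd 0).deriv, (hφd 1).deriv] at h01
  have h0 : x + (0:ℝ) • v = x := by simp
  have h1 : x + (1:ℝ) • v = y := by simp [hv]
  rw [h0, h1] at h01
  rw [inner_sub_left]
  linarith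

/-- The gradient of a `C²` function is continuous. -/
lemma continuous_gradient (f : E → ℝ) (hf : ContDiff ℝ 2 f) :
    Continuous (gradient f) := by
  have h1 : Continuous (fderiv ℝ f) := hf.continuous_fderiv two_ne_zero
  exact (InnerProductSpace.toDual ℝ E).symm.continuous.comp h1

/-- A continuous real function `f` with `s * f s ≥ 0` everywhere vanishes at `0`. -/
lemma eq_zero_of_mul_nonneg (f : ℝ → ℝ) (hf : Continuous f) (h : ∀ s : ℝ, 0 ≤ s * f s) :
    f 0 = 0 := by
  have hpos : 0 ≤ f 0 := by
    refine ge_of_tendsto (hf.continuousAt.tendsto.mono_left nhdsWithin_le_nhds :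
      Filter.Tendsto f (nhdsWithin 0 (Set.Ioi 0)) (nhds (f 0))) ?_
    filter_upwards [self_mem_nhdsWithin] with s hs
    exact nonneg_of_mul_nonneg_right (h s) hs
  have hneg : f 0 ≤ 0 := by
    refine le_of_tendsto (hf.continuousAt.tendsto.mono_left nhdsWithin_le_nhds :
      Filter.Tendsto f (nhdsWithin 0 (Set.Iio 0)) (nhds (f 0))) ?_
    filter_upwards [self_mem_nhdsWithin] with s hs
    nlinarith [h s, Set.mem_Iio.mp hs]
  linarith

end Aux

/-- Lemma 3.1 of the paper: the dissipation inequality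
`(Ξ + ∇G(τ)) · (τ + ∇Σ(Ξ)) ≥ 0` holds for all `Ξ, τ` iff the zero sets of
`Ξ + ∇G(τ)` and `τ + ∇Σ(Ξ)` coincide and both `G` and `Σ` are convex. -/
theorem statement_0 (m : ℕ) (hm : 1 ≤ m)
    (G Sg : EuclideanSpace ℝ (Fin m) → ℝ)
    (hG : ContDiff ℝ 2 G) (hSg : ContDiff ℝ 2 Sg) :
    (∀ Ξ τ : EuclideanSpace ℝ (Fin m), 0 ≤ ⟪Ξ + gradient G τ, τ + gradient Sg Ξ⟫) ↔
      ((∀ Ξ τ : EuclideanSpace ℝ (Fin m),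
          Ξ + gradient G τ = 0 ↔ τ + gradient Sg Ξ = 0) ∧
        ConvexOn ℝ Set.univ G ∧ ConvexOn ℝ Set.univ Sg) := by
  have hGd : Differentiable ℝ G := hG.differentiable two_ne_zero
  have hSgd : Differentiable ℝ Sg := hSg.differentiable two_ne_zero
  have hGc : Continuous (gradient G) := continuous_gradient G hG
  have hSgc : Continuous (gradient Sg) := continuous_gradient Sg hSg
  constructor
  · intro h
    -- (i) forward: Ξ + ∇G τ = 0 → τ + ∇Σ Ξ = 0
    have hi1 : ∀ Ξ τ, Ξ + gradient G τ = 0 → τ + gradient Sg Ξ = 0 := by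
      intro Ξ τ h0
      have key : ∀ k : EuclideanSpace ℝ (Fin m), ⟪k, τ + gradient Sg Ξ⟫ = 0 := by
        intro k
        have hcont : Continuous (fun s : ℝ => ⟪k, τ + gradient Sg (Ξ + s • k)⟫) := by
          apply Continuous.inner continuous_const
          exact continuous_const.add (hSgc.comp (continuous_const.add
            (continuous_id.smul continuous_const)))
        have hineq : ∀ s : ℝ, 0 ≤ s * ⟪k, τ + gradient Sg (Ξ + s • k)⟫ := by
          intro s
          have := h (Ξ + s • k) τ
          have heq : Ξ + s • k + gradient G τ = s • k := by
            rw [add_right_comm, h0, zero_add]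
          rw [heq, real_inner_smul_left] at this
          exact this
        have := eq_zero_of_mul_nonneg _ hcont hineq
        simpa using this
      have := key (τ + gradient Sg Ξ)
      rwa [inner_self_eq_zero] at this
    -- (i) backward: τ + ∇Σ Ξ = 0 → Ξ + ∇G τ = 0
    have hi2 : ∀ Ξ τ, τ + gradient Sg Ξ = 0 → Ξ + gradient G τ = 0 := by
      intro Ξ τ h0
      have key : ∀ k : EuclideanSpace ℝ (Fin m), ⟪Ξ + gradient G τ, k⟫ = 0 := by
        intro k
        have hcont : Continuous (fun s : ℝ => ⟪Ξ + gradient G (τ + s • k), k⟫) := by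
          apply Continuous.inner _ continuous_const
          exact continuous_const.add (hGc.comp (continuous_const.add
            (continuous_id.smul continuous_const)))
        have hineq : ∀ s : ℝ, 0 ≤ s * ⟪Ξ + gradient G (τ + s • k), k⟫ := by
          intro s
          have := h Ξ (τ + s • k)
          have heq : τ + s • k + gradient Sg Ξ = s • k := by
            rw [add_right_comm, h0, zero_add]
          rw [heq, real_inner_smul_right] at this
          exact this
        have := eq_zero_of_mul_nonneg _ hcont hineq
        simpa using this
      have := key (Ξ + gradient G τ)
      rwa [inner_self_eq_zero] at this
    refine ⟨fun Ξ τ => ⟨hi1 Ξ τ, hi2 Ξ τ⟩, ?_, ?_⟩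
    · -- convexity of G
      apply convexOn_of_inner_mono G hGd
      intro x y
      have h0 : (-(gradient G x)) + gradient G x = 0 := by abel
      have hτ : x + gradient Sg (-(gradient G x)) = 0 := hi1 _ _ h0
      have hSgeq : gradient Sg (-(gradient G x)) = -x :=
        eq_neg_of_add_eq_zero_right hτ
      have := h (-(gradient G x)) y
      rw [hSgeq] at this
      have e1 : -(gradient G x) + gradient G y = gradient G y - gradient G x := by abel
      have e2 : y + -x = y - x := by abel
      rw [e1, e2] at this
      exact this
    · -- convexity of Sg
      apply convexOn_of_inner_mono Sg hSgd
      intro x y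
      have h0 : (-(gradient Sg x)) + gradient Sg x = 0 := by abel
      have hΞ : x + gradient G (-(gradient Sg x)) = 0 := hi2 _ _ h0
      have hGeq : gradient G (-(gradient Sg x)) = -x :=
        eq_neg_of_add_eq_zero_right hΞ
      have := h y (-(gradient Sg x))
      rw [hGeq] at this
      have e1 : y + -x = y - x := by abel
      have e2 : -(gradient Sg x) + gradient Sg y = gradient Sg y - gradient Sg x := by abel
      rw [e1, e2] at this
      rw [real_inner_comm] at this
      exact this
  · rintro ⟨hiff, hGconv, _⟩
    intro Ξ τ
    have h0 : (-(gradient Sg Ξ)) + gradient Sg Ξ = 0 := by abel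
    have hΞ : Ξ + gradient G (-(gradient Sg Ξ)) = 0 := (hiff Ξ _).2 h0
    have hGeq : gradient G (-(gradient Sg Ξ)) = -Ξ :=
      eq_neg_of_add_eq_zero_right hΞ
    have hmono := inner_mono_of_convexOn G hGd hGconv (-(gradient Sg Ξ)) τ
    rw [hGeq] at hmono
    have e1 : gradient G τ - -Ξ = Ξ + gradient G τ := by abel
    have e2 : τ - -(gradient Sg Ξ) = τ + gradient Sg Ξ := by abel
    rw [e1, e2] at hmono
    exact hmono
end

section
/- Let D ≥ 1, γ_v > 0, let Σ : ℝ^D → ℝ be C² with 0 < ∇²Σ(Ξ) ≤ γ_v·Id for all Ξ and with ∇Σ : ℝ^D → ℝ^D a bijection, and let G : ℝ^D → ℝ be C² with ∇G(τ) = −(∇Σ)⁻¹(−τ) for all τ. Then for all Ξ, τ ∈ ℝ^D the dissipation satisfies (Ξ + ∇G(τ)) · (τ + ∇Σ(Ξ)) ≥ (1/γ_v) |τ + ∇Σ(Ξ)|². -/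
open scoped RealInnerProductSpace

section aux

variable {D : ℕ}

local notation "E" => EuclideanSpace ℝ (Fin D)

lemma gradient_eq_comp (f : E → ℝ) :
    gradient f = ⇑(InnerProductSpace.toDual ℝ E).symm.toContinuousLinearEquiv ∘ (fderiv ℝ f) := by
  funext x
  simp [gradient]

lemma contDiff_gradient_aux (f : E → ℝ) (hf : ContDiff ℝ 2 f) : ContDiff ℝ 1 (gradient f) := by
  have h1 : ContDiff ℝ 1 (fderiv ℝ f) := hf.fderiv_right (by norm_num)
  rw [gradient_eq_comp]
  exact (InnerProductSpace.toDual ℝ E).symm.toContinuousLinearEquiv.contDiff.comp h1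

lemma fderiv_gradient_apply (f : E → ℝ) (x u v : E) :
    ⟪fderiv ℝ (gradient f) x u, v⟫ = fderiv ℝ (fderiv ℝ f) x u v := by
  rw [gradient_eq_comp, ContinuousLinearEquiv.comp_fderiv]
  simp [InnerProductSpace.toDual_symm_apply]

lemma fderiv_gradient_symm (f : E → ℝ) (hf : ContDiff ℝ 2 f) (x u v : E) :
    ⟪fderiv ℝ (gradient f) x u, v⟫ = ⟪fderiv ℝ (gradient f) x v, u⟫ := by
  rw [fderiv_gradient_apply, fderiv_gradient_apply]
  exact (hf.contDiffAt.isSymmSndFDerivAt (by simp [minSmoothness_of_isRCLikeNormedField])) u v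

end aux

/-- Lower bound (pr1) on the relaxation dissipation: if `0 < ∇²Σ ≤ γ_v·Id`,
`∇Σ` is a bijection and `∇G(τ) = −(∇Σ)⁻¹(−τ)`, then
`(Ξ + ∇G(τ)) · (τ + ∇Σ(Ξ)) ≥ (1/γ_v)|τ + ∇Σ(Ξ)|²`. -/
theorem statement_3 (D : ℕ) (hD : 1 ≤ D) (γv : ℝ) (hγv : 0 < γv)
    (Sg G : EuclideanSpace ℝ (Fin D) → ℝ)
    (hSg : ContDiff ℝ 2 Sg) (hG : ContDiff ℝ 2 G)
    (hpd : ∀ Ξ X : EuclideanSpace ℝ (Fin D), X ≠ 0 →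
      0 < ⟪fderiv ℝ (gradient Sg) Ξ X, X⟫)
    (hub : ∀ Ξ X : EuclideanSpace ℝ (Fin D),
      ⟪fderiv ℝ (gradient Sg) Ξ X, X⟫ ≤ γv * ‖X‖ ^ 2)
    (hbij : Function.Bijective (gradient Sg))
    (hGrad : ∀ τ, gradient G τ = -(Function.invFun (gradient Sg) (-τ))) :
    ∀ Ξ τ : EuclideanSpace ℝ (Fin D),
      (1 / γv) * ‖τ + gradient Sg Ξ‖ ^ 2 ≤ ⟪Ξ + gradient G τ, τ + gradient Sg Ξ⟫ := by
  have hfd : Differentiable ℝ (gradient Sg) :=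
    (contDiff_gradient_aux Sg hSg).differentiable one_ne_zero
  have hgd : Differentiable ℝ (gradient G) :=
    (contDiff_gradient_aux G hG).differentiable one_ne_zero
  -- nonnegativity of Hessian of Sg
  have hpsd : ∀ x Z : EuclideanSpace ℝ (Fin D), 0 ≤ ⟪fderiv ℝ (gradient Sg) x Z, Z⟫ := by
    intro x Z
    rcases eq_or_ne Z 0 with rfl | hZ
    · simp
    · exact (hpd x Z hZ).le
  -- co-coercivity of the Hessian A := fderiv (gradient Sg) x
  have hcoco : ∀ x Y : EuclideanSpace ℝ (Fin D),
      (1 / γv) * ‖fderiv ℝ (gradient Sg) x Y‖ ^ 2 ≤ ⟪fderiv ℝ (gradient Sg) x Y, Y⟫ := by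
    intro x Y
    set A := fderiv ℝ (gradient Sg) x with hA
    have hsym : ∀ u v : EuclideanSpace ℝ (Fin D), ⟪A u, v⟫ = ⟪A v, u⟫ :=
      fderiv_gradient_symm Sg hSg x
    have h0 : 0 ≤ ⟪A (Y - (1/γv) • A Y), Y - (1/γv) • A Y⟫ := hpsd x _
    have hexp : A (Y - (1/γv) • A Y) = A Y - (1/γv) • A (A Y) := by
      rw [map_sub, map_smul]
    rw [hexp, inner_sub_left, inner_sub_right, inner_sub_right, real_inner_smul_left,
      real_inner_smul_left, real_inner_smul_right, real_inner_smul_right] at h0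
    have hs : ⟪A (A Y), Y⟫ = ⟪A Y, A Y⟫ := by rw [hsym (A Y) Y]
    have hub2 : ⟪A (A Y), A Y⟫ ≤ γv * ‖A Y‖ ^ 2 := hub x (A Y)
    have hn : ⟪A Y, A Y⟫ = ‖A Y‖ ^ 2 := real_inner_self_eq_norm_sq (A Y)
    rw [hs, hn] at h0
    have hsγ : (1/γv) * γv = 1 := by field_simp
    have h9 : (1/γv) * ((1/γv) * ⟪A (A Y), A Y⟫) ≤ (1/γv) * ‖A Y‖ ^ 2 := by
      have h10 : (1/γv) * (1/γv) * ⟪A (A Y), A Y⟫ ≤ (1/γv) * (1/γv) * (γv * ‖A Y‖ ^ 2) :=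
        mul_le_mul_of_nonneg_left hub2 (by positivity)
      calc (1/γv) * ((1/γv) * ⟪A (A Y), A Y⟫) = (1/γv) * (1/γv) * ⟪A (A Y), A Y⟫ := by ring
      _ ≤ (1/γv) * (1/γv) * (γv * ‖A Y‖ ^ 2) := h10
      _ = ((1/γv) * γv) * ((1/γv) * ‖A Y‖ ^ 2) := by ring
      _ = (1/γv) * ‖A Y‖ ^ 2 := by rw [hsγ, one_mul]
    linarith
  -- chain rule : (fderiv (grad Sg) at -(grad G τ)).comp (fderiv (grad G) τ) = id
  have hrinv : ∀ y, gradient Sg (Function.invFun (gradient Sg) y) = y := fun y =>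
    Function.rightInverse_invFun hbij.2 y
  have hlinv : ∀ x, Function.invFun (gradient Sg) (gradient Sg x) = x := fun x =>
    Function.leftInverse_invFun hbij.1 x
  have hkey : ∀ σ, gradient Sg (-(gradient G σ)) = -σ := by
    intro σ
    rw [hGrad σ, neg_neg, hrinv]
  have hcomp : ∀ τ, (fderiv ℝ (gradient Sg) (-(gradient G τ))).comp (fderiv ℝ (gradient G) τ)
      = ContinuousLinearMap.id ℝ (EuclideanSpace ℝ (Fin D)) := by
    intro τ
    have h1 : HasFDerivAt (fun σ => -(gradient G σ)) (-(fderiv ℝ (gradient G) τ)) τ :=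
      (hgd τ).hasFDerivAt.neg
    have h2 : HasFDerivAt (gradient Sg) (fderiv ℝ (gradient Sg) (-(gradient G τ)))
        (-(gradient G τ)) := (hfd _).hasFDerivAt
    have h3 : HasFDerivAt (fun σ => gradient Sg (-(gradient G σ)))
        ((fderiv ℝ (gradient Sg) (-(gradient G τ))).comp (-(fderiv ℝ (gradient G) τ))) τ :=
      by have := h2.comp τ h1; exact this
    have h4 : HasFDerivAt (fun σ : EuclideanSpace ℝ (Fin D) => -σ)
        (-(ContinuousLinearMap.id ℝ (EuclideanSpace ℝ (Fin D)))) τ := (hasFDerivAt_id τ).neg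
    have h5 : (fun σ => gradient Sg (-(gradient G σ)))
        = fun σ : EuclideanSpace ℝ (Fin D) => -σ := funext hkey
    rw [h5] at h3
    have h6 := h3.unique h4
    rw [ContinuousLinearMap.comp_neg] at h6
    exact neg_injective h6
  -- lower bound on the Hessian of G
  have hBlb : ∀ τ X : EuclideanSpace ℝ (Fin D),
      (1 / γv) * ‖X‖ ^ 2 ≤ ⟪fderiv ℝ (gradient G) τ X, X⟫ := by
    intro τ X
    set Y := fderiv ℝ (gradient G) τ X with hY
    have hAY : fderiv ℝ (gradient Sg) (-(gradient G τ)) Y = X := by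
      have := congrArg (fun L : EuclideanSpace ℝ (Fin D) →L[ℝ] EuclideanSpace ℝ (Fin D) => L X)
        (hcomp τ)
      simpa using this
    have h := hcoco (-(gradient G τ)) Y
    rw [hAY] at h
    calc (1/γv) * ‖X‖^2 ≤ ⟪X, Y⟫ := h
    _ = ⟪Y, X⟫ := real_inner_comm _ _
  -- strong monotonicity of gradient G
  have hmono : ∀ u v : EuclideanSpace ℝ (Fin D),
      (1 / γv) * ‖u - v‖ ^ 2 ≤ ⟪gradient G u - gradient G v, u - v⟫ := by
    intro u v
    set w := u - v with hw
    set c := (1/γv) * ‖w‖^2 with hc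
    set ψ : ℝ → ℝ := fun t => ⟪gradient G (v + t • w), w⟫ - t * c with hψ
    have hder : ∀ t : ℝ, HasDerivAt ψ (⟪fderiv ℝ (gradient G) (v + t • w) w, w⟫ - c) t := by
      intro t
      have hc1 : HasDerivAt (fun t : ℝ => v + t • w) w t := by
        simpa using ((hasDerivAt_id t).smul_const w).const_add v
      have hc2 : HasDerivAt (fun t : ℝ => gradient G (v + t • w))
          (fderiv ℝ (gradient G) (v + t • w) w) t :=
        (hgd _).hasFDerivAt.comp_hasDerivAt t hc1
      have hc3 : HasDerivAt (fun t : ℝ => ⟪gradient G (v + t • w), w⟫)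
          (⟪fderiv ℝ (gradient G) (v + t • w) w, w⟫) t := by
        have := hc2.inner ℝ (hasDerivAt_const t w)
        simpa using this
      exact hc3.sub (hasDerivAt_mul_const c)
    have hmon : Monotone ψ := by
      apply monotone_of_deriv_nonneg
      · exact fun t => (hder t).differentiableAt
      · intro t
        rw [(hder t).deriv]
        have := hBlb (v + t • w) w
        rw [hc]
        linarith
    have h01 := hmon (by norm_num : (0:ℝ) ≤ 1)
    simp only [hψ, zero_smul, add_zero, one_smul, zero_mul, sub_zero, one_mul] at h01
    have hvw : v + w = u := by rw [hw]; abel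
    rw [hvw] at h01
    rw [inner_sub_left]
    rw [hc] at h01
    linarith
  -- conclude
  intro Ξ τ
  have hgv : gradient G (-(gradient Sg Ξ)) = -Ξ := by
    rw [hGrad, neg_neg, hlinv]
  have h := hmono τ (-(gradient Sg Ξ))
  rw [hgv, sub_neg_eq_add, sub_neg_eq_add] at h
  calc (1/γv) * ‖τ + gradient Sg Ξ‖^2 ≤ ⟪gradient G τ + Ξ, τ + gradient Sg Ξ⟫ := h
  _ = ⟪Ξ + gradient G τ, τ + gradient Sg Ξ⟫ := by rw [add_comm (gradient G τ) Ξ]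
end

section
/- Let y : ℝ³ × ℝ → ℝ³ be a C² map, write v_i = ∂y_i/∂t and F_{iα}(x,t) = ∂y_i/∂x_α. Then for all (x,t): ∂/∂t [ det F(x,t) ] = Σ_{i,α} ∂/∂x_α [ v_i(x,t) (cof F(x,t))_{iα} ]. -/
noncomputable section

/-- Matrices as `Fin 3 → Fin 3 → ℝ`. -/
abbrev Mat3 : Type := Fin 3 → Fin 3 → ℝ

/-- The Levi-Civita symbol on `Fin 3`. -/
def lev (i j k : Fin 3) : ℝ :=
  (((j : ℕ) : ℝ) - ((i : ℕ) : ℝ)) * (((k : ℕ) : ℝ) - ((i : ℕ) : ℝ)) *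
    (((k : ℕ) : ℝ) - ((j : ℕ) : ℝ)) / 2

/-- The cofactor matrix `(cof M)_{iα} = ½ ε_{ijk} ε_{αβγ} M_{jβ} M_{kγ}`. -/
def cof3 (M : Mat3) : Mat3 := fun i α =>
  (1 / 2) * ∑ j, ∑ k, ∑ β, ∑ γ, lev i j k * lev α β γ * M j β * M k γ

/-- The determinant of a `3×3` matrix. -/
def det3 (M : Mat3) : ℝ := Matrix.det (Matrix.of M)

set_option maxHeartbeats 4000000 in
/-- Kinematic transport identity for the determinant (kinnl): for a `C²`
motion `y(x,t)` with velocity `v = ∂_t y` and deformation gradient `F = ∇_x y`,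
`∂_t det F = Σ_{i,α} ∂_α ( v_i (cof F)_{iα} )`. -/
theorem statement_6 (y : (Fin 3 → ℝ) → ℝ → (Fin 3 → ℝ))
    (hy : ContDiff ℝ 2 (fun q : (Fin 3 → ℝ) × ℝ => y q.1 q.2))
    (v : (Fin 3 → ℝ) → ℝ → (Fin 3 → ℝ))
    (hv : ∀ x t i, v x t i = deriv (fun s => y x s i) t)
    (F : (Fin 3 → ℝ) → ℝ → Mat3)
    (hF : ∀ x t i α, F x t i α = fderiv ℝ (fun z => y z t i) x (Pi.single α 1)) :
    ∀ (x : Fin 3 → ℝ) (t : ℝ),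
      deriv (fun s => det3 (F x s)) t =
        ∑ i, ∑ α, fderiv ℝ (fun z => v z t i * cof3 (F z t) i α) x (Pi.single α 1) := by
  intro x t
  set g : Fin 3 → ((Fin 3 → ℝ) × ℝ) → ℝ := fun i q => y q.1 q.2 i with hgdef
  have hg : ∀ i, ContDiff ℝ 2 (g i) := fun i =>
    (ContinuousLinearMap.proj (R := ℝ) (φ := fun _ : Fin 3 => ℝ) i).contDiff.comp hy
  set c : Fin 3 → ((Fin 3 → ℝ) × ℝ) → ((Fin 3 → ℝ) × ℝ) →L[ℝ] ℝ :=
    fun i => fderiv ℝ (g i) with hcdef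
  have hc : ∀ i, ContDiff ℝ 1 (c i) := fun i => (hg i).fderiv_right (by norm_num)
  have hgd : ∀ i q, DifferentiableAt ℝ (g i) q := fun i q =>
    ((hg i).differentiable (by norm_num)).differentiableAt
  have hcd : ∀ i q, DifferentiableAt ℝ (c i) q := fun i q =>
    ((hc i).differentiable (by norm_num)).differentiableAt
  have hsym : ∀ (i : Fin 3) (a b : (Fin 3 → ℝ) × ℝ),
      fderiv ℝ (c i) (x, t) a b = fderiv ℝ (c i) (x, t) b a := fun i a b =>
    ((hg i).contDiffAt.isSymmSndFDerivAt (by simp [minSmoothness_of_isRCLikeNormedField])) a b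
  -- entries of F in terms of the full second-variable derivative
  have hFc : ∀ z s i α, F z s i α = c i (z, s) (Pi.single α (1:ℝ), (0:ℝ)) := by
    intro z s i α
    have h : HasFDerivAt (fun z' => y z' s i)
        ((c i (z,s)).comp (ContinuousLinearMap.inl ℝ (Fin 3 → ℝ) ℝ)) z :=
      ((hgd i (z,s)).hasFDerivAt).comp z (f := fun e => (e, s)) (hasFDerivAt_prodMk_left z s)
    rw [hF, h.fderiv]; simp
  have hFz : ∀ z s, F z s = fun j β => c j (z,s) (Pi.single β (1:ℝ), (0:ℝ)) :=
    fun z s => funext fun j => funext fun β => hFc z s j β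
  have hvc : ∀ z s i, v z s i = c i (z, s) ((0 : Fin 3 → ℝ), (1:ℝ)) := by
    intro z s i
    have h0 : HasFDerivAt (fun s' : ℝ => y z s' i)
        ((c i (z,s)).comp (ContinuousLinearMap.inr ℝ (Fin 3 → ℝ) ℝ)) s :=
      ((hgd i (z,s)).hasFDerivAt).comp s (f := fun e => (z, e)) (hasFDerivAt_prodMk_right z s)
    rw [hv, (h0.hasDerivAt).deriv]; simp
  -- derivative of q ↦ c i q u
  have hCA : ∀ (i : Fin 3) (u q), HasFDerivAt (fun q' => c i q' u)
      ((ContinuousLinearMap.apply ℝ ℝ u).comp (fderiv ℝ (c i) q)) q := fun i u q =>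
    (ContinuousLinearMap.apply ℝ ℝ u).hasFDerivAt.comp q (hcd i q).hasFDerivAt
  -- time derivative of entries
  have hct : ∀ (i : Fin 3) (u : (Fin 3 → ℝ) × ℝ),
      HasDerivAt (fun s => c i (x, s) u)
        (fderiv ℝ (c i) (x,t) ((0:Fin 3 → ℝ), (1:ℝ)) u) t := by
    intro i u
    have h := ((hCA i u (x,t)).comp t (hasFDerivAt_prodMk_right x t)).hasDerivAt
    simpa [Function.comp_def] using h
  -- space derivative of entries
  have hAx : ∀ (i : Fin 3) (u : (Fin 3 → ℝ) × ℝ),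
      HasFDerivAt (fun z => c i (z, t) u)
        (((ContinuousLinearMap.apply ℝ ℝ u).comp (fderiv ℝ (c i) (x,t))).comp
          (ContinuousLinearMap.inl ℝ (Fin 3 → ℝ) ℝ)) x := fun i u =>
    (hCA i u (x,t)).comp x (f := fun e => (e, t)) (hasFDerivAt_prodMk_left x t)
  set A : Fin 3 → ((Fin 3 → ℝ) × ℝ) → ((Fin 3 → ℝ) →L[ℝ] ℝ) := fun i u =>
    (((ContinuousLinearMap.apply ℝ ℝ u).comp (fderiv ℝ (c i) (x,t))).comp
      (ContinuousLinearMap.inl ℝ (Fin 3 → ℝ) ℝ)) with hAdef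
  have hAapp : ∀ i u w, A i u w = fderiv ℝ (c i) (x,t) (w, 0) u := by
    intro i u w; simp [hAdef]
  -- full spatial derivative of v_i (cof F)_{iα}
  have hfull : ∀ (i α : Fin 3),
      HasFDerivAt (fun z => c i (z,t) ((0:Fin 3 → ℝ), (1:ℝ)) *
          cof3 (fun j β => c j (z,t) (Pi.single β (1:ℝ), (0:ℝ))) i α)
        ((c i (x,t) ((0:Fin 3 → ℝ), (1:ℝ))) •
            ((1/2 : ℝ) • ∑ j, ∑ k, ∑ β, ∑ γ,
              ((lev i j k * lev α β γ * c j (x,t) (Pi.single β (1:ℝ), (0:ℝ))) •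
                  A k (Pi.single γ (1:ℝ), (0:ℝ)) +
                (c k (x,t) (Pi.single γ (1:ℝ), (0:ℝ))) •
                  ((lev i j k * lev α β γ) • A j (Pi.single β (1:ℝ), (0:ℝ))))) +
          (cof3 (fun j β => c j (x,t) (Pi.single β (1:ℝ), (0:ℝ))) i α) •
            A i ((0:Fin 3 → ℝ), (1:ℝ))) x := by
    intro i α
    exact (hAx i _).mul
      ((HasFDerivAt.fun_sum fun j _ => HasFDerivAt.fun_sum fun k _ => HasFDerivAt.fun_sum fun β _ =>
        HasFDerivAt.fun_sum fun γ _ =>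
          ((hAx j (Pi.single β (1:ℝ), (0:ℝ))).const_mul (lev i j k * lev α β γ)).mul
            (hAx k (Pi.single γ (1:ℝ), (0:ℝ)))).const_mul (1/2 : ℝ))
  have hR : ∀ (i α : Fin 3),
      fderiv ℝ (fun z => v z t i * cof3 (F z t) i α) x (Pi.single α 1)
      = c i (x,t) ((0:Fin 3 → ℝ), (1:ℝ)) * ((1/2 : ℝ) * ∑ j, ∑ k, ∑ β, ∑ γ,
            (lev i j k * lev α β γ * c j (x,t) (Pi.single β (1:ℝ), (0:ℝ)) *
                fderiv ℝ (c k) (x,t) (Pi.single α (1:ℝ), (0:ℝ)) (Pi.single γ (1:ℝ), (0:ℝ)) +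
              c k (x,t) (Pi.single γ (1:ℝ), (0:ℝ)) *
                (lev i j k * lev α β γ *
                  fderiv ℝ (c j) (x,t) (Pi.single α (1:ℝ), (0:ℝ)) (Pi.single β (1:ℝ), (0:ℝ))))) +
        cof3 (fun j β => c j (x,t) (Pi.single β (1:ℝ), (0:ℝ))) i α *
          fderiv ℝ (c i) (x,t) (Pi.single α (1:ℝ), (0:ℝ)) ((0:Fin 3 → ℝ), (1:ℝ)) := by
    intro i α
    have hfn : (fun z => v z t i * cof3 (F z t) i α)
        = (fun z => c i (z,t) ((0:Fin 3 → ℝ), (1:ℝ)) *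
            cof3 (fun j β => c j (z,t) (Pi.single β (1:ℝ), (0:ℝ))) i α) := by
      funext z; rw [hvc z t i, hFz z t]
    rw [hfn, (hfull i α).fderiv]
    simp only [ContinuousLinearMap.add_apply, ContinuousLinearMap.smul_apply,
      ContinuousLinearMap.coe_sum', Finset.sum_apply, smul_eq_mul, hAapp, mul_assoc]
  -- time derivative of the determinant
  have hdet : ∀ M : Mat3, det3 M =
      M 0 0 * M 1 1 * M 2 2 - M 0 0 * M 1 2 * M 2 1 - M 0 1 * M 1 0 * M 2 2 +
        M 0 1 * M 1 2 * M 2 0 + M 0 2 * M 1 0 * M 2 1 - M 0 2 * M 1 1 * M 2 0 := fun M => by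
    simp [det3, Matrix.det_fin_three]
  have hfun : (fun s => det3 (F x s)) = fun s =>
      c 0 (x,s) (Pi.single 0 (1:ℝ), (0:ℝ)) * c 1 (x,s) (Pi.single 1 (1:ℝ), (0:ℝ)) * c 2 (x,s) (Pi.single 2 (1:ℝ), (0:ℝ))
    - c 0 (x,s) (Pi.single 0 (1:ℝ), (0:ℝ)) * c 1 (x,s) (Pi.single 2 (1:ℝ), (0:ℝ)) * c 2 (x,s) (Pi.single 1 (1:ℝ), (0:ℝ))
    - c 0 (x,s) (Pi.single 1 (1:ℝ), (0:ℝ)) * c 1 (x,s) (Pi.single 0 (1:ℝ), (0:ℝ)) * c 2 (x,s) (Pi.single 2 (1:ℝ), (0:ℝ))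
    + c 0 (x,s) (Pi.single 1 (1:ℝ), (0:ℝ)) * c 1 (x,s) (Pi.single 2 (1:ℝ), (0:ℝ)) * c 2 (x,s) (Pi.single 0 (1:ℝ), (0:ℝ))
    + c 0 (x,s) (Pi.single 2 (1:ℝ), (0:ℝ)) * c 1 (x,s) (Pi.single 0 (1:ℝ), (0:ℝ)) * c 2 (x,s) (Pi.single 1 (1:ℝ), (0:ℝ))
    - c 0 (x,s) (Pi.single 2 (1:ℝ), (0:ℝ)) * c 1 (x,s) (Pi.single 1 (1:ℝ), (0:ℝ)) * c 2 (x,s) (Pi.single 0 (1:ℝ), (0:ℝ)) := by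
    funext s; rw [hdet]; simp only [hFc]
  have hL := (((((((hct 0 (Pi.single 0 (1:ℝ), (0:ℝ))).mul (hct 1 (Pi.single 1 (1:ℝ), (0:ℝ)))).mul (hct 2 (Pi.single 2 (1:ℝ), (0:ℝ)))).sub
    (((hct 0 (Pi.single 0 (1:ℝ), (0:ℝ))).mul (hct 1 (Pi.single 2 (1:ℝ), (0:ℝ)))).mul (hct 2 (Pi.single 1 (1:ℝ), (0:ℝ))))).sub
    (((hct 0 (Pi.single 1 (1:ℝ), (0:ℝ))).mul (hct 1 (Pi.single 0 (1:ℝ), (0:ℝ)))).mul (hct 2 (Pi.single 2 (1:ℝ), (0:ℝ))))).add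
    (((hct 0 (Pi.single 1 (1:ℝ), (0:ℝ))).mul (hct 1 (Pi.single 2 (1:ℝ), (0:ℝ)))).mul (hct 2 (Pi.single 0 (1:ℝ), (0:ℝ))))).add
    (((hct 0 (Pi.single 2 (1:ℝ), (0:ℝ))).mul (hct 1 (Pi.single 0 (1:ℝ), (0:ℝ)))).mul (hct 2 (Pi.single 1 (1:ℝ), (0:ℝ))))).sub
    (((hct 0 (Pi.single 2 (1:ℝ), (0:ℝ))).mul (hct 1 (Pi.single 1 (1:ℝ), (0:ℝ)))).mul (hct 2 (Pi.single 0 (1:ℝ), (0:ℝ))))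
  rw [hfun]; refine hL.deriv.trans ?_
  simp only [hR]
  simp only [cof3, Fin.sum_univ_three]
  norm_num [lev]
  simp only [hsym 0 ((0:Fin 3 → ℝ), (1:ℝ)) (Pi.single 0 (1:ℝ), (0:ℝ)),
    hsym 0 ((0:Fin 3 → ℝ), (1:ℝ)) (Pi.single 1 (1:ℝ), (0:ℝ)),
    hsym 0 ((0:Fin 3 → ℝ), (1:ℝ)) (Pi.single 2 (1:ℝ), (0:ℝ)),
    hsym 0 (Pi.single 1 (1:ℝ), (0:ℝ)) (Pi.single 0 (1:ℝ), (0:ℝ)),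
    hsym 0 (Pi.single 2 (1:ℝ), (0:ℝ)) (Pi.single 0 (1:ℝ), (0:ℝ)),
    hsym 0 (Pi.single 2 (1:ℝ), (0:ℝ)) (Pi.single 1 (1:ℝ), (0:ℝ)),
    hsym 1 ((0:Fin 3 → ℝ), (1:ℝ)) (Pi.single 0 (1:ℝ), (0:ℝ)),
    hsym 1 ((0:Fin 3 → ℝ), (1:ℝ)) (Pi.single 1 (1:ℝ), (0:ℝ)),
    hsym 1 ((0:Fin 3 → ℝ), (1:ℝ)) (Pi.single 2 (1:ℝ), (0:ℝ)),
    hsym 1 (Pi.single 1 (1:ℝ), (0:ℝ)) (Pi.single 0 (1:ℝ), (0:ℝ)),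
    hsym 1 (Pi.single 2 (1:ℝ), (0:ℝ)) (Pi.single 0 (1:ℝ), (0:ℝ)),
    hsym 1 (Pi.single 2 (1:ℝ), (0:ℝ)) (Pi.single 1 (1:ℝ), (0:ℝ)),
    hsym 2 ((0:Fin 3 → ℝ), (1:ℝ)) (Pi.single 0 (1:ℝ), (0:ℝ)),
    hsym 2 ((0:Fin 3 → ℝ), (1:ℝ)) (Pi.single 1 (1:ℝ), (0:ℝ)),
    hsym 2 ((0:Fin 3 → ℝ), (1:ℝ)) (Pi.single 2 (1:ℝ), (0:ℝ)),
    hsym 2 (Pi.single 1 (1:ℝ), (0:ℝ)) (Pi.single 0 (1:ℝ), (0:ℝ)),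
    hsym 2 (Pi.single 2 (1:ℝ), (0:ℝ)) (Pi.single 0 (1:ℝ), (0:ℝ)),
    hsym 2 (Pi.single 2 (1:ℝ), (0:ℝ)) (Pi.single 1 (1:ℝ), (0:ℝ))]
  ring
end
end

section
/- Let y : ℝ³ × ℝ → ℝ³ be a C² map, write v_i = ∂y_i/∂t and F_{iα}(x,t) = ∂y_i/∂x_α. Then for all (x,t) and all i, α ∈ {1,2,3}: ∂/∂t [ (cof F(x,t))_{iα} ] = Σ_{β} ∂/∂x_β [ ε_{ijk} ε_{αβγ} v_j(x,t) F_{kγ}(x,t) ] (sum over j, k, γ as well). -/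
noncomputable section

lemma lev_swap23 (a b c : Fin 3) : lev a c b = - lev a b c := by unfold lev; ring

lemma lev_prod_swap (i j k α β γ : Fin 3) :
    lev i k j * lev α γ β = lev i j k * lev α β γ := by unfold lev; ring

lemma sum_swap4 (f : Fin 3 → Fin 3 → Fin 3 → Fin 3 → ℝ) :
    ∑ j, ∑ k, ∑ β, ∑ γ, f j k β γ = ∑ j, ∑ k, ∑ β, ∑ γ, f k j γ β := by
  rw [Finset.sum_comm]
  exact Finset.sum_congr rfl fun j _ => Finset.sum_congr rfl fun k _ => Finset.sum_comm

lemma reorder4 (f : Fin 3 → Fin 3 → Fin 3 → Fin 3 → ℝ) :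
    ∑ β, ∑ j, ∑ k, ∑ γ, f j k β γ = ∑ j, ∑ k, ∑ β, ∑ γ, f j k β γ := by
  rw [Finset.sum_comm]
  exact Finset.sum_congr rfl fun j _ => Finset.sum_comm

lemma quad_zero (α : Fin 3) (Q : Fin 3 → Fin 3 → ℝ) (hQ : ∀ b c, Q b c = Q c b) :
    ∑ β, ∑ γ, lev α β γ * Q β γ = 0 := by
  have h1 : ∑ β, ∑ γ, lev α β γ * Q β γ = ∑ γ, ∑ β, lev α β γ * Q β γ :=
    Finset.sum_comm
  have h2 : ∑ γ, ∑ β, lev α β γ * Q β γ = ∑ β, ∑ γ, (- lev α β γ) * Q β γ := by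
    refine Finset.sum_congr rfl fun b _ => Finset.sum_congr rfl fun c _ => ?_
    rw [← lev_swap23, hQ]
  have h3 : ∑ β, ∑ γ, (- lev α β γ) * Q β γ = - ∑ β, ∑ γ, lev α β γ * Q β γ := by
    simp only [neg_mul, Finset.sum_neg_distrib]
  linarith [h1.trans (h2.trans h3)]

lemma key_alg (i α : Fin 3) (P Fm : Fin 3 → Fin 3 → ℝ) (vv : Fin 3 → ℝ)
    (Q : Fin 3 → Fin 3 → Fin 3 → ℝ) (hQ : ∀ k β γ, Q k β γ = Q k γ β) :
    (1 / 2 : ℝ) * ∑ j, ∑ k, ∑ β, ∑ γ,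
        ((lev i j k * lev α β γ * P j β) * Fm k γ
          + (lev i j k * lev α β γ * Fm j β) * P k γ)
    = ∑ β, ∑ j, ∑ k, ∑ γ,
        ((lev i j k * lev α β γ * P j β) * Fm k γ
          + (lev i j k * lev α β γ * vv j) * Q k β γ) := by
  simp only [Finset.sum_add_distrib]
  have e2 : ∑ j, ∑ k, ∑ β, ∑ γ, (lev i j k * lev α β γ * Fm j β) * P k γ
      = ∑ j, ∑ k, ∑ β, ∑ γ, (lev i j k * lev α β γ * P j β) * Fm k γ := by
    rw [sum_swap4 (fun j k β γ => (lev i j k * lev α β γ * Fm j β) * P k γ)]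
    refine Finset.sum_congr rfl fun j _ => Finset.sum_congr rfl fun k _ =>
      Finset.sum_congr rfl fun β _ => Finset.sum_congr rfl fun γ _ => ?_
    have h := lev_prod_swap i j k α β γ
    linear_combination (Fm k γ * P j β) * h
  have e3 : ∑ β, ∑ j, ∑ k, ∑ γ, (lev i j k * lev α β γ * P j β) * Fm k γ
      = ∑ j, ∑ k, ∑ β, ∑ γ, (lev i j k * lev α β γ * P j β) * Fm k γ :=
    reorder4 _
  have e4 : ∑ β, ∑ j, ∑ k, ∑ γ, (lev i j k * lev α β γ * vv j) * Q k β γ = 0 := by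
    rw [reorder4 (fun j k β γ => (lev i j k * lev α β γ * vv j) * Q k β γ)]
    have hz : ∀ j k : Fin 3, ∑ β, ∑ γ, (lev i j k * lev α β γ * vv j) * Q k β γ = 0 := by
      intro j k
      have h0 := quad_zero α (fun β γ => Q k β γ) (fun b c => hQ k b c)
      calc ∑ β, ∑ γ, (lev i j k * lev α β γ * vv j) * Q k β γ
          = (lev i j k * vv j) * ∑ β, ∑ γ, lev α β γ * Q k β γ := by
            rw [Finset.mul_sum]
            exact Finset.sum_congr rfl fun β _ => by
              rw [Finset.mul_sum]
              exact Finset.sum_congr rfl fun γ _ => by ring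
        _ = 0 := by rw [h0, mul_zero]
    simp only [hz, Finset.sum_const_zero]
  rw [e2, e3, e4]
  ring

/-- Kinematic transport identity for the cofactor (kinnl): for a `C²` motion
`y(x,t)` with velocity `v = ∂_t y` and deformation gradient `F = ∇_x y`,
`∂_t (cof F)_{iα} = Σ_β ∂_β ( ε_{ijk} ε_{αβγ} v_j F_{kγ} )`. -/
theorem statement_7 (y : (Fin 3 → ℝ) → ℝ → (Fin 3 → ℝ))
    (hy : ContDiff ℝ 2 (fun q : (Fin 3 → ℝ) × ℝ => y q.1 q.2))
    (v : (Fin 3 → ℝ) → ℝ → (Fin 3 → ℝ))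
    (hv : ∀ x t i, v x t i = deriv (fun s => y x s i) t)
    (F : (Fin 3 → ℝ) → ℝ → Mat3)
    (hF : ∀ x t i α, F x t i α = fderiv ℝ (fun z => y z t i) x (Pi.single α 1)) :
    ∀ (x : Fin 3 → ℝ) (t : ℝ) (i α : Fin 3),
      deriv (fun s => cof3 (F x s) i α) t =
        ∑ β, fderiv ℝ
          (fun z => ∑ j, ∑ k, ∑ γ, lev i j k * lev α β γ * v z t j * F z t k γ)
          x (Pi.single β 1) := by
  intro x t i α
  set Y : Fin 3 → ((Fin 3 → ℝ) × ℝ) → ℝ := fun n q => y q.1 q.2 n with hYdef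
  have hY : ∀ n : Fin 3, ContDiff ℝ 2 (Y n) := contDiff_pi.mp hy
  have hYd : ∀ n, Differentiable ℝ (Y n) := fun n => (hY n).differentiable (by norm_num)
  have hD1 : ∀ n, ContDiff ℝ 1 (fderiv ℝ (Y n)) := fun n => (hY n).fderiv_right (by norm_num)
  have hDd : ∀ n, Differentiable ℝ (fderiv ℝ (Y n)) := fun n => (hD1 n).differentiable (by norm_num)
  set B : Fin 3 → ((Fin 3 → ℝ) × ℝ) → ((Fin 3 → ℝ) × ℝ) → ℝ :=
    fun n u w => fderiv ℝ (fderiv ℝ (Y n)) (x, t) u w with hBdef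
  have hsymm : ∀ n u w, B n u w = B n w u :=
    fun n => (hY n).contDiffAt.isSymmSndFDerivAt (by simp)
  have hclm : ∀ n (u : (Fin 3 → ℝ) × ℝ) (p₀ : (Fin 3 → ℝ) × ℝ),
      HasFDerivAt (fun p => fderiv ℝ (Y n) p u)
        ((fderiv ℝ (fderiv ℝ (Y n)) p₀).flip u) p₀ := by
    intro n u p₀
    have := (hDd n p₀).hasFDerivAt.clm_apply (hasFDerivAt_const u p₀)
    simpa using this
  set ι : ((Fin 3 → ℝ)) →L[ℝ] ((Fin 3 → ℝ) × ℝ) :=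
    (ContinuousLinearMap.id ℝ (Fin 3 → ℝ)).prod 0 with hιdef
  have hincl : ∀ (z : Fin 3 → ℝ) (s : ℝ), HasFDerivAt (fun w : Fin 3 → ℝ => (w, s)) ι z :=
    fun z s => HasFDerivAt.prodMk (hasFDerivAt_id z) (hasFDerivAt_const s z)
  have hFrep : ∀ z s k γ, F z s k γ = fderiv ℝ (Y k) (z, s) (Pi.single γ 1, 0) := by
    intro z s k γ
    have h2 : HasFDerivAt (fun w : Fin 3 → ℝ => Y k (w, s))
        ((fderiv ℝ (Y k) (z, s)).comp ι) z :=
      HasFDerivAt.comp (g := Y k) z (hYd k (z, s)).hasFDerivAt (hincl z s)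
    have h3 : (fun w : Fin 3 → ℝ => y w s k) = fun w => Y k (w, s) := rfl
    rw [hF, h3, h2.fderiv]
    simp [hιdef]
  have hvrep : ∀ z s j, v z s j = fderiv ℝ (Y j) (z, s) (0, 1) := by
    intro z s j
    have h1 : HasDerivAt (fun r : ℝ => ((z : Fin 3 → ℝ), r)) ((0 : Fin 3 → ℝ), (1 : ℝ)) s :=
      HasDerivAt.prodMk (hasDerivAt_const s z) (hasDerivAt_id s)
    have h2 : HasDerivAt (fun r : ℝ => Y j (z, r)) (fderiv ℝ (Y j) (z, s) (0, 1)) s :=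
      (hYd j (z, s)).hasFDerivAt.comp_hasDerivAt s h1
    have h3 : (fun r : ℝ => y z r j) = fun r => Y j (z, r) := rfl
    rw [hv, h3, h2.deriv]
  -- time derivative of F components
  have hΦ : ∀ j β, HasDerivAt (fun s => F x s j β) (B j (0, 1) (Pi.single β 1, 0)) t := by
    intro j β
    have h1 : HasDerivAt (fun s : ℝ => ((x : Fin 3 → ℝ), s)) ((0 : Fin 3 → ℝ), (1 : ℝ)) t :=
      HasDerivAt.prodMk (hasDerivAt_const t x) (hasDerivAt_id t)
    have h2 := (hclm j (Pi.single β 1, 0) (x, t)).comp_hasDerivAt t h1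
    have h3 : (fun s : ℝ => F x s j β)
        = fun s => fderiv ℝ (Y j) (x, s) (Pi.single β 1, 0) :=
      funext fun s => hFrep x s j β
    rw [h3]
    simpa [hBdef, Function.comp_def] using h2
  -- spatial derivatives of v and F components
  have hv' : ∀ j, HasFDerivAt (fun z => v z t j)
      (((fderiv ℝ (fderiv ℝ (Y j)) (x, t)).flip ((0 : Fin 3 → ℝ), (1 : ℝ))).comp ι) x := by
    intro j
    have h3 : (fun z => v z t j) = fun z => fderiv ℝ (Y j) (z, t) ((0 : Fin 3 → ℝ), (1 : ℝ)) :=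
      funext fun z => hvrep z t j
    rw [h3]
    exact (hclm j _ (x, t)).comp x (hincl x t)
  have hF' : ∀ k γ, HasFDerivAt (fun z => F z t k γ)
      (((fderiv ℝ (fderiv ℝ (Y k)) (x, t)).flip (Pi.single γ 1, 0)).comp ι) x := by
    intro k γ
    have h3 : (fun z => F z t k γ) = fun z => fderiv ℝ (Y k) (z, t) (Pi.single γ 1, 0) :=
      funext fun z => hFrep z t k γ
    rw [h3]
    exact (hclm k _ (x, t)).comp x (hincl x t)
  -- LHS computation
  have hLHS : deriv (fun s => cof3 (F x s) i α) t
      = (1 / 2) * ∑ j, ∑ k, ∑ β, ∑ γ,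
          ((lev i j k * lev α β γ * B j (0, 1) (Pi.single β 1, 0)) * F x t k γ
            + (lev i j k * lev α β γ * F x t j β) * B k (0, 1) (Pi.single γ 1, 0)) := by
    have hterm : ∀ (j k β γ : Fin 3), HasDerivAt
        (fun s => lev i j k * lev α β γ * F x s j β * F x s k γ)
        ((lev i j k * lev α β γ * B j (0, 1) (Pi.single β 1, 0)) * F x t k γ
          + (lev i j k * lev α β γ * F x t j β) * B k (0, 1) (Pi.single γ 1, 0)) t := by
      intro j k β γ
      exact (((hΦ j β).const_mul (lev i j k * lev α β γ)).mul (hΦ k γ))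
    have hsum : HasDerivAt (fun s => cof3 (F x s) i α)
        ((1 / 2) * ∑ j, ∑ k, ∑ β, ∑ γ,
          ((lev i j k * lev α β γ * B j (0, 1) (Pi.single β 1, 0)) * F x t k γ
            + (lev i j k * lev α β γ * F x t j β) * B k (0, 1) (Pi.single γ 1, 0))) t := by
      simp only [cof3]
      exact HasDerivAt.const_mul _ (HasDerivAt.fun_sum fun j _ => HasDerivAt.fun_sum fun k _ =>
        HasDerivAt.fun_sum fun β _ => HasDerivAt.fun_sum fun γ _ => hterm j k β γ)
    exact hsum.deriv
  -- RHS computation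
  have hRHS : ∀ β : Fin 3, fderiv ℝ
      (fun z => ∑ j, ∑ k, ∑ γ, lev i j k * lev α β γ * v z t j * F z t k γ)
      x (Pi.single β 1)
      = ∑ j, ∑ k, ∑ γ,
          ((lev i j k * lev α β γ * B j (Pi.single β 1, 0) (0, 1)) * F x t k γ
            + (lev i j k * lev α β γ * v x t j) * B k (Pi.single β 1, 0) (Pi.single γ 1, 0)) := by
    intro β
    have hterm : ∀ (j k γ : Fin 3), HasFDerivAt
        (fun z => lev i j k * lev α β γ * v z t j * F z t k γ)
        ((lev i j k * lev α β γ * v x t j) •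
            (((fderiv ℝ (fderiv ℝ (Y k)) (x, t)).flip (Pi.single γ 1, 0)).comp ι)
          + F x t k γ • ((lev i j k * lev α β γ) •
            (((fderiv ℝ (fderiv ℝ (Y j)) (x, t)).flip ((0 : Fin 3 → ℝ), (1 : ℝ))).comp ι))) x := by
      intro j k γ
      exact ((hv' j).const_mul (lev i j k * lev α β γ)).mul (hF' k γ)
    have hsum : HasFDerivAt
        (fun z => ∑ j, ∑ k, ∑ γ, lev i j k * lev α β γ * v z t j * F z t k γ)
        (∑ j, ∑ k, ∑ γ,
          ((lev i j k * lev α β γ * v x t j) •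
            (((fderiv ℝ (fderiv ℝ (Y k)) (x, t)).flip (Pi.single γ 1, 0)).comp ι)
          + F x t k γ • ((lev i j k * lev α β γ) •
            (((fderiv ℝ (fderiv ℝ (Y j)) (x, t)).flip ((0 : Fin 3 → ℝ), (1 : ℝ))).comp ι)))) x :=
      HasFDerivAt.fun_sum fun j _ => HasFDerivAt.fun_sum fun k _ => HasFDerivAt.fun_sum fun γ _ =>
        hterm j k γ
    rw [hsum.fderiv]
    simp only [ContinuousLinearMap.coe_sum', Finset.sum_apply,
      ContinuousLinearMap.add_apply, ContinuousLinearMap.smul_apply,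
      ContinuousLinearMap.comp_apply, ContinuousLinearMap.flip_apply, hιdef,
      ContinuousLinearMap.prod_apply, ContinuousLinearMap.id_apply,
      ContinuousLinearMap.zero_apply, hBdef, smul_eq_mul]
    apply Finset.sum_congr rfl; intro j _
    apply Finset.sum_congr rfl; intro k _
    apply Finset.sum_congr rfl; intro γ _
    ring
  rw [hLHS]
  simp only [hRHS]
  have hswap : ∀ (n β : Fin 3), B n (Pi.single β 1, 0) ((0 : Fin 3 → ℝ), (1 : ℝ))
      = B n ((0 : Fin 3 → ℝ), (1 : ℝ)) (Pi.single β 1, 0) := fun n β => hsymm n _ _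
  simp only [hswap]
  exact key_alg i α (fun j β => B j ((0 : Fin 3 → ℝ), (1 : ℝ)) (Pi.single β 1, 0)) (F x t)
    (v x t) (fun k β γ => B k (Pi.single β 1, 0) (Pi.single γ 1, 0))
    (fun k β γ => hsymm k _ _)
end
end
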